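/- (Duality theorem.) Let A be an m×n matrix and B an m×q matrix with entries in T = ℝ ∪ {−∞} such that every column of A has at least one finite entry, every row of A has at least one finite entry, and every row of B has at least one finite entry, and let P be a q×n row-stochastic matrix. Let F : ℝⁿ → ℝⁿ be the associated Shapley operator and F* : ℝᵐ → ℝᵐ the dual Shapley operator. Then c̄w̄(F*) = −c̲w̲(F). -/

import Mathlib

noncomputable section

variable {m n q : ℕ}

/-- The real value of a finite element of `T = ℝ ∪ {-∞}` (junk value `0` at `-∞`). -/
def sval (a : WithBot ℝ) : ℝ := a.unbotD 0

/-- The Shapley operator `F : ℝⁿ → ℝⁿ` associated with `A ∈ T^{m×n}`, `B ∈ T^{m×q}` and a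
row-stochastic `P ∈ ℝ^{q×n}`:
`F(x)_j = min_{i : A_{ij} ≠ -∞} ( -A_{ij} + max_{k : B_{ik} ≠ -∞} ( B_{ik} + Σ_l P_{kl} x_l ) )`. -/
def shapley (A : Fin m → Fin n → WithBot ℝ) (B : Fin m → Fin q → WithBot ℝ)
    (P : Fin q → Fin n → ℝ) (x : Fin n → ℝ) : Fin n → ℝ := fun j =>
  sInf {r : ℝ | ∃ i, A i j ≠ ⊥ ∧
    r = - sval (A i j) +
      sSup {s : ℝ | ∃ k, B i k ≠ ⊥ ∧ s = sval (B i k) + ∑ l, P k l * x l}}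

/-- The dual Shapley operator `F* : ℝᵐ → ℝᵐ`:
`F*(y)_i = min_{k : B_{ik} ≠ -∞} ( -B_{ik} + Σ_l P_{kl} · max_{i' : A_{i'l} ≠ -∞} (A_{i'l} + y_{i'}) )`. -/
def dualShapley (A : Fin m → Fin n → WithBot ℝ) (B : Fin m → Fin q → WithBot ℝ)
    (P : Fin q → Fin n → ℝ) (y : Fin m → ℝ) : Fin m → ℝ := fun i =>
  sInf {r : ℝ | ∃ k, B i k ≠ ⊥ ∧
    r = - sval (B i k) +
      ∑ l, P k l * sSup {s : ℝ | ∃ i', A i' l ≠ ⊥ ∧ s = sval (A i' l) + y i'}}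

/-- The upper Collatz–Wielandt number of a self-map of `ℝ^d`, as an extended real. -/
def ucwR {d : ℕ} (G : (Fin d → ℝ) → (Fin d → ℝ)) : EReal :=
  sInf ((fun μ : ℝ => (μ : EReal)) '' {μ : ℝ | ∃ z : Fin d → ℝ, ∀ i, G z i ≤ μ + z i})

/-- The lower Collatz–Wielandt number of a self-map of `ℝ^d`, as an extended real. -/
def lcwR {d : ℕ} (G : (Fin d → ℝ) → (Fin d → ℝ)) : EReal :=
  sSup ((fun μ : ℝ => (μ : EReal)) '' {μ : ℝ | ∃ z : Fin d → ℝ, ∀ i, μ + z i ≤ G z i})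

section helpers

variable {d : ℕ} {p : Fin d → Prop} {f : Fin d → ℝ} {c : ℝ}

lemma finset_fin (p : Fin d → Prop) (f : Fin d → ℝ) :
    Set.Finite {r : ℝ | ∃ i, p i ∧ r = f i} := by
  have : {r : ℝ | ∃ i, p i ∧ r = f i} ⊆ Set.range f := by
    rintro r ⟨i, _, rfl⟩; exact ⟨i, rfl⟩
  exact (Set.finite_range f).subset this

lemma fin_sInf_le {i : Fin d} (hi : p i) :
    sInf {r : ℝ | ∃ i, p i ∧ r = f i} ≤ f i :=
  csInf_le (finset_fin p f).bddBelow ⟨i, hi, rfl⟩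

lemma le_fin_sInf (hne : ∃ i, p i) (h : ∀ i, p i → c ≤ f i) :
    c ≤ sInf {r : ℝ | ∃ i, p i ∧ r = f i} := by
  obtain ⟨i₀, hi₀⟩ := hne
  have hmem : f i₀ ∈ {r : ℝ | ∃ i, p i ∧ r = f i} := ⟨i₀, hi₀, rfl⟩
  apply le_csInf ⟨f i₀, hmem⟩
  rintro r ⟨i, hi, rfl⟩; exact h i hi

lemma fin_sInf_mem (hne : ∃ i, p i) :
    ∃ i, p i ∧ sInf {r : ℝ | ∃ i, p i ∧ r = f i} = f i := by
  obtain ⟨i₀, hi₀⟩ := hne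
  have hmem : f i₀ ∈ {r : ℝ | ∃ i, p i ∧ r = f i} := ⟨i₀, hi₀, rfl⟩
  exact Set.Nonempty.csInf_mem ⟨f i₀, hmem⟩ (finset_fin p f)

lemma le_fin_sSup {i : Fin d} (hi : p i) :
    f i ≤ sSup {r : ℝ | ∃ i, p i ∧ r = f i} :=
  le_csSup (finset_fin p f).bddAbove ⟨i, hi, rfl⟩

lemma fin_sSup_le (hne : ∃ i, p i) (h : ∀ i, p i → f i ≤ c) :
    sSup {r : ℝ | ∃ i, p i ∧ r = f i} ≤ c := by
  obtain ⟨i₀, hi₀⟩ := hne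
  have hmem : f i₀ ∈ {r : ℝ | ∃ i, p i ∧ r = f i} := ⟨i₀, hi₀, rfl⟩
  apply csSup_le ⟨f i₀, hmem⟩
  rintro r ⟨i, hi, rfl⟩; exact h i hi

lemma fin_sSup_mem (hne : ∃ i, p i) :
    ∃ i, p i ∧ sSup {r : ℝ | ∃ i, p i ∧ r = f i} = f i := by
  obtain ⟨i₀, hi₀⟩ := hne
  have hmem : f i₀ ∈ {r : ℝ | ∃ i, p i ∧ r = f i} := ⟨i₀, hi₀, rfl⟩
  exact Set.Nonempty.csSup_mem ⟨f i₀, hmem⟩ (finset_fin p f)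

lemma ereal_sInf_neg (T : Set EReal) : sInf (Neg.neg '' T) = - sSup T := by
  apply le_antisymm
  · refine EReal.le_neg_of_le_neg (sSup_le ?_)
    intro a ha
    refine EReal.le_neg_of_le_neg ?_
    exact sInf_le ⟨a, ha, rfl⟩
  · refine le_sInf ?_
    rintro b ⟨a, ha, rfl⟩
    rw [EReal.neg_le_neg_iff]
    exact le_sSup ha

end helpers

section duality

variable (A : Fin m → Fin n → WithBot ℝ) (B : Fin m → Fin q → WithBot ℝ)
  (P : Fin q → Fin n → ℝ)

/-- `aT y l = max_{i'} (A_{i'l} + y_{i'})`. -/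
def aT (y : Fin m → ℝ) (l : Fin n) : ℝ :=
  sSup {s : ℝ | ∃ i', A i' l ≠ ⊥ ∧ s = sval (A i' l) + y i'}

/-- `Mb x i = max_k (B_{ik} + P_k · x)`. -/
def Mb (x : Fin n → ℝ) (i : Fin m) : ℝ :=
  sSup {s : ℝ | ∃ k, B i k ≠ ⊥ ∧ s = sval (B i k) + ∑ l, P k l * x l}

lemma shapley_eq (x : Fin n → ℝ) (j : Fin n) :
    shapley A B P x j = sInf {r : ℝ | ∃ i, A i j ≠ ⊥ ∧ r = - sval (A i j) + Mb B P x i} := rfl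

lemma dualShapley_eq (y : Fin m → ℝ) (i : Fin m) :
    dualShapley A B P y i =
      sInf {r : ℝ | ∃ k, B i k ≠ ⊥ ∧ r = - sval (B i k) + ∑ l, P k l * aT A y l} := rfl

lemma le_Mb {x : Fin n → ℝ} {i : Fin m} {k : Fin q} (h : B i k ≠ ⊥) :
    sval (B i k) + ∑ l, P k l * x l ≤ Mb B P x i := by
  unfold Mb
  exact le_fin_sSup (p := fun k => B i k ≠ ⊥) (f := fun k => sval (B i k) + ∑ l, P k l * x l) h

lemma Mb_mem {x : Fin n → ℝ} {i : Fin m} (h : ∃ k, B i k ≠ ⊥) :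
    ∃ k, B i k ≠ ⊥ ∧ Mb B P x i = sval (B i k) + ∑ l, P k l * x l := by
  unfold Mb; exact fin_sSup_mem h

lemma le_aT {y : Fin m → ℝ} {i' : Fin m} {l : Fin n} (h : A i' l ≠ ⊥) :
    sval (A i' l) + y i' ≤ aT A y l := by
  unfold aT
  exact le_fin_sSup (p := fun i' => A i' l ≠ ⊥) (f := fun i' => sval (A i' l) + y i') h

lemma aT_le {y : Fin m → ℝ} {l : Fin n} {c : ℝ} (hne : ∃ i', A i' l ≠ ⊥)
    (h : ∀ i', A i' l ≠ ⊥ → sval (A i' l) + y i' ≤ c) : aT A y l ≤ c := by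
  unfold aT; exact fin_sSup_le hne h

lemma dir1 (hAcol : ∀ j, ∃ i, A i j ≠ ⊥) (hBrow : ∀ i, ∃ k, B i k ≠ ⊥)
    (μ : ℝ) (y : Fin m → ℝ) (hy : ∀ i, dualShapley A B P y i ≤ μ + y i) :
    ∃ x : Fin n → ℝ, ∀ j, -μ + x j ≤ shapley A B P x j := by
  refine ⟨fun l => -(aT A y l), fun j => ?_⟩
  rw [shapley_eq]
  refine le_fin_sInf (hAcol j) ?_
  intro i hij
  -- attained witness for dualShapley at i
  obtain ⟨k, hbk, hk⟩ := fin_sInf_mem (f := fun k => - sval (B i k) + ∑ l, P k l * aT A y l)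
    (hBrow i)
  have h1 : - sval (B i k) + ∑ l, P k l * aT A y l ≤ μ + y i := by
    have h0 := hy i
    rw [dualShapley_eq, hk] at h0
    exact h0
  have h2 : sval (B i k) + ∑ l, P k l * (-(aT A y l)) ≤ Mb B P (fun l => -(aT A y l)) i :=
    le_Mb B P hbk
  have h3 : ∑ l, P k l * (-(aT A y l)) = - ∑ l, P k l * aT A y l := by
    simp [mul_neg, Finset.sum_neg_distrib]
  have h4 : sval (A i j) + y i ≤ aT A y j := le_aT A hij
  rw [h3] at h2
  show -μ + -(aT A y j) ≤ -sval (A i j) + Mb B P (fun l => -(aT A y l)) i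
  linarith

lemma dir2 (hAcol : ∀ j, ∃ i, A i j ≠ ⊥) (hBrow : ∀ i, ∃ k, B i k ≠ ⊥)
    (hPnn : ∀ k l, 0 ≤ P k l) (hPsum : ∀ k, ∑ l, P k l = 1)
    (μ : ℝ) (x : Fin n → ℝ) (hx : ∀ j, -μ + x j ≤ shapley A B P x j) :
    ∃ y : Fin m → ℝ, ∀ i, dualShapley A B P y i ≤ μ + y i := by
  set y : Fin m → ℝ := fun i => -(Mb B P x i) with hy
  refine ⟨y, fun i => ?_⟩
  obtain ⟨k₀, hbk₀, hk₀⟩ := Mb_mem B P (x := x) (hBrow i)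
  have haT : ∀ l, aT A y l ≤ μ - x l := by
    intro l
    refine aT_le A (hAcol l) ?_
    intro i' hi'
    have h5 : sInf {r : ℝ | ∃ i, A i l ≠ ⊥ ∧ r = - sval (A i l) + Mb B P x i}
        ≤ - sval (A i' l) + Mb B P x i' := fin_sInf_le hi'
    have h6 := hx l
    rw [shapley_eq] at h6
    have : y i' = -(Mb B P x i') := rfl
    rw [this]
    linarith
  have hsum : ∑ l, P k₀ l * aT A y l ≤ μ - ∑ l, P k₀ l * x l := by
    have h7 : ∑ l, P k₀ l * aT A y l ≤ ∑ l, P k₀ l * (μ - x l) :=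
      Finset.sum_le_sum fun l _ => mul_le_mul_of_nonneg_left (haT l) (hPnn k₀ l)
    have h8 : ∑ l, P k₀ l * (μ - x l) = μ - ∑ l, P k₀ l * x l := by
      have h9 : ∑ l, P k₀ l * (μ - x l) = ∑ l, (P k₀ l * μ - P k₀ l * x l) := by
        simp [mul_sub]
      rw [h9, Finset.sum_sub_distrib, ← Finset.sum_mul, hPsum k₀, one_mul]
    linarith
  have hle : dualShapley A B P y i ≤ - sval (B i k₀) + ∑ l, P k₀ l * aT A y l := by
    rw [dualShapley_eq]; exact fin_sInf_le hbk₀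
  have hyi : y i = -(sval (B i k₀) + ∑ l, P k₀ l * x l) := by
    rw [hy]; exact congrArg Neg.neg hk₀
  linarith

end duality

/-- Duality theorem: `c̄w̄(F*) = -c̲w̲(F)`. -/
theorem stmt2 (hm : 0 < m) (hn : 0 < n) (hq : 0 < q)
    (A : Fin m → Fin n → WithBot ℝ) (B : Fin m → Fin q → WithBot ℝ)
    (P : Fin q → Fin n → ℝ)
    (hAcol : ∀ j, ∃ i, A i j ≠ ⊥)
    (hArow : ∀ i, ∃ j, A i j ≠ ⊥)
    (hBrow : ∀ i, ∃ k, B i k ≠ ⊥)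
    (hPnn : ∀ k l, 0 ≤ P k l)
    (hPsum : ∀ k, ∑ l, P k l = 1) :
    ucwR (dualShapley A B P) = - lcwR (shapley A B P) := by
  unfold ucwR lcwR
  have hset : ((fun μ : ℝ => (μ : EReal)) ''
        {μ : ℝ | ∃ z : Fin m → ℝ, ∀ i, dualShapley A B P z i ≤ μ + z i})
      = Neg.neg '' ((fun μ : ℝ => (μ : EReal)) ''
        {μ : ℝ | ∃ z : Fin n → ℝ, ∀ i, μ + z i ≤ shapley A B P z i}) := by
    ext e
    constructor
    · rintro ⟨μ, ⟨y, hy⟩, rfl⟩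
      obtain ⟨x, hx⟩ := dir1 A B P hAcol hBrow μ y hy
      refine ⟨(↑(-μ) : EReal), ⟨-μ, ⟨x, hx⟩, rfl⟩, ?_⟩
      rw [EReal.coe_neg, neg_neg]
    · rintro ⟨e', ⟨ν, ⟨x, hx⟩, rfl⟩, rfl⟩
      obtain ⟨y, hy⟩ := dir2 A B P hAcol hBrow hPnn hPsum (-ν) x
        (by intro j; have := hx j; linarith)
      exact ⟨-ν, ⟨y, hy⟩, (EReal.coe_neg ν).symm ▸ rfl⟩
  rw [hset, ereal_sInf_neg]
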